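/- Let n ≥ 2 be an integer, t ∈ (0,1), and μ ∈ [μ₀(n,t), -t/n] where μ₀(n,t) = ((3-2n)t + 1 - 2n + sqrt((1-t)((4n-5)t + 4n²-4n+1)))/(2(n-1)²). Set q̃₂ = (t - μ + n + 1)/(n+1) and q̃₃ = ((1+t+(n-1)μ)/(n+1))·((1+n+(n-1)(t+nμ))/(1-t)). Then q̃₂ ≤ q̃₃. -/
import Mathlib
set_option maxHeartbeats 800000

/-- Let `n ≥ 2`, `t ∈ (0,1)`, `μ ∈ [μ₀(n,t), -t/n]`,
`q̃₂ = (t - μ + n + 1)/(n+1)` and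
`q̃₃ = ((1+t+(n-1)μ)/(n+1))·((1+n+(n-1)(t+nμ))/(1-t))`. Then `q̃₂ ≤ q̃₃`. -/
theorem stmt7 (n : ℕ) (hn : 2 ≤ n) (t μ : ℝ) (ht0 : 0 < t) (ht1 : t < 1)
    (hμl : ((3 - 2*(n:ℝ))*t + 1 - 2*(n:ℝ) +
        Real.sqrt ((1 - t) * ((4*(n:ℝ) - 5)*t + 4*(n:ℝ)^2 - 4*(n:ℝ) + 1)))
      / (2*((n:ℝ) - 1)^2) ≤ μ)
    (hμu : μ ≤ -t/(n:ℝ))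
    (q₂ q₃ : ℝ)
    (hq₂ : q₂ = (t - μ + (n:ℝ) + 1)/((n:ℝ) + 1))
    (hq₃ : q₃ = ((1 + t + ((n:ℝ) - 1)*μ)/((n:ℝ) + 1)) *
      ((1 + (n:ℝ) + ((n:ℝ) - 1)*(t + (n:ℝ)*μ))/(1 - t))) :
    q₂ ≤ q₃ := by
  have hx : (2:ℝ) ≤ (n:ℝ) := by exact_mod_cast hn
  set x : ℝ := (n:ℝ) with hxdef
  have hDnn : (0:ℝ) ≤ (1 - t) * ((4*x - 5)*t + 4*x^2 - 4*x + 1) := mul_nonneg (by linarith) (by nlinarith)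
  set s : ℝ := Real.sqrt ((1 - t) * ((4*x - 5)*t + 4*x^2 - 4*x + 1)) with hsdef
  have hs0 : 0 ≤ s := Real.sqrt_nonneg _
  have hs2 : s^2 = (1 - t) * ((4*x - 5)*t + 4*x^2 - 4*x + 1) := Real.sq_sqrt hDnn
  have hA : (0:ℝ) < 2*(x-1)^2 := by nlinarith
  have hM : s ≤ 2*(x-1)^2*μ + (2*x-3)*t + 2*x - 1 := by
    have := (div_le_iff₀ hA).mp hμl
    nlinarith
  -- g(μ) ≥ 0
  have hg : 0 ≤ (x-1)^2*μ^2 + ((2*x-1)+(2*x-3)*t)*μ + t*(t+3) := by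
    nlinarith [mul_self_nonneg (2*(x-1)^2*μ + (2*x-3)*t + 2*x - 1 - s),
      mul_le_mul_of_nonneg_left hM hs0, sq_nonneg (x-1)]
  have key : (t - μ + x + 1)*(1-t) ≤
      (1 + t + (x-1)*μ) * (1 + x + (x-1)*(t + x*μ)) := by nlinarith
  rw [hq₂, hq₃, div_mul_div_comm, div_le_div_iff₀ (by linarith) (by nlinarith)]
  nlinarith [mul_le_mul_of_nonneg_right key (by linarith : (0:ℝ) ≤ x + 1)]
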